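/- arXiv:2205.03131 — 6 statements merged into one kernel-verified Lean document; each statement's English description precedes it below -/
import Mathlib

section
/- Let β ∈ [0, 1] and 0 < c < 1, and assume that for all ε > 0 the learning tuple satisfies the (ε^{1−β}, c)-central condition up to ε: log E_{P_W ⊗ μ}[exp(−ε^{1−β} r(W', Z'))] ≤ −c ε^{1−β} E_{P_W ⊗ μ}[r(W', Z')] + ε^{1−β} ε. If I(W; Zᵢ) > 0 for each i, then E[ℰ(W, Sₙ)] ≤ ((1 − c)/c) · E[ℛ̂(W, Sₙ)] + (2/(n c)) Σ_{i=1}^n I(W; Zᵢ)^{1/(2−β)}. -/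
open MeasureTheory ProbabilityTheory

/-- Real-valued Kullback–Leibler divergence `D(P‖Q) = ∫ log (dP/dQ) dP`. -/
noncomputable def klDivR {α : Type*} [MeasurableSpace α] (P Q : Measure α) : ℝ :=
  ∫ x, llr P Q x ∂P

open scoped ENNReal

section Aux
variable {α : Type*} [MeasurableSpace α]

lemma aux_exp_neg_llr_integral_le (P Q : Measure α) [IsProbabilityMeasure P]
    [IsProbabilityMeasure Q] (hPQ : P ≪ Q) :
    Integrable (fun x => Real.exp (- llr P Q x)) P ∧
      ∫ x, Real.exp (- llr P Q x) ∂P ≤ 1 := by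
  set g : α → ℝ := fun x => Real.exp (- llr P Q x) with hg
  have hmeas : Measurable g := (measurable_llr P Q).neg.exp
  have hρ : Measurable (P.rnDeriv Q) := Measure.measurable_rnDeriv P Q
  have hfin : ∀ᵐ x ∂Q, P.rnDeriv Q x < ⊤ := by
    refine ae_lt_top hρ ?_
    exact (Measure.lintegral_rnDeriv_le.trans_lt (by simp [ENNReal.one_lt_top] : P Set.univ < ⊤)).ne
  have hPd : Q.withDensity (P.rnDeriv Q) = P := Measure.withDensity_rnDeriv_eq P Q hPQ
  have hlin : ∫⁻ x, ENNReal.ofReal (g x) ∂P ≤ 1 := by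
    conv_lhs => rw [← hPd]
    rw [lintegral_withDensity_eq_lintegral_mul _ hρ (by exact hmeas.ennreal_ofReal)]
    calc ∫⁻ x, (P.rnDeriv Q * fun x => ENNReal.ofReal (g x)) x ∂Q
        ≤ ∫⁻ _, 1 ∂Q := by
          refine lintegral_mono_ae ?_
          filter_upwards [hfin] with x hx
          simp only [Pi.mul_apply]
          rcases eq_or_ne (P.rnDeriv Q x) 0 with h0 | h0
          · simp [h0]
          · have hxt : (P.rnDeriv Q x).toReal > 0 :=
              ENNReal.toReal_pos h0 hx.ne
            have : g x = ((P.rnDeriv Q x).toReal)⁻¹ := by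
              rw [hg]; simp only [llr]
              rw [Real.exp_neg, Real.exp_log hxt]
            rw [this, ENNReal.ofReal_inv_of_pos hxt, ENNReal.ofReal_toReal hx.ne]
            rw [ENNReal.mul_inv_cancel h0 hx.ne]
      _ = 1 := by simp
  have hInt : Integrable g P := by
    refine ⟨hmeas.aestronglyMeasurable, ?_⟩
    rw [hasFiniteIntegral_iff_ofReal (Filter.Eventually.of_forall fun x => (Real.exp_pos _).le)]
    exact hlin.trans_lt ENNReal.one_lt_top
  refine ⟨hInt, ?_⟩
  rw [integral_eq_lintegral_of_nonneg_ae (Filter.Eventually.of_forall fun x => (Real.exp_pos _).le)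
    hmeas.aestronglyMeasurable]
  calc (∫⁻ x, ENNReal.ofReal (g x) ∂P).toReal ≤ (1 : ℝ≥0∞).toReal :=
        ENNReal.toReal_mono (by simp) hlin
    _ = 1 := by simp

lemma klDivR_nonneg' (P Q : Measure α) [IsProbabilityMeasure P]
    [IsProbabilityMeasure Q] (hPQ : P ≪ Q) (hint : Integrable (llr P Q) P) :
    0 ≤ ∫ x, llr P Q x ∂P := by
  obtain ⟨hInt, hle⟩ := aux_exp_neg_llr_integral_le P Q hPQ
  have h1 : ∫ x, - llr P Q x ∂P ≤ ∫ x, (Real.exp (- llr P Q x) - 1) ∂P := by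
    refine integral_mono hint.neg (hInt.sub (integrable_const 1)) fun x => ?_
    have := Real.add_one_le_exp (- llr P Q x)
    linarith
  rw [integral_neg, integral_sub hInt (integrable_const 1)] at h1
  simp only [integral_const, measure_univ, ENNReal.toReal_one, probReal_univ, smul_eq_mul, one_mul, mul_one] at h1
  linarith

/-- Donsker–Varadhan inequality. -/
lemma donsker_varadhan (P Q : Measure α) [IsProbabilityMeasure P] [IsProbabilityMeasure Q]
    (hPQ : P ≪ Q) (f : α → ℝ) (hf : Integrable f P)
    (hllr : Integrable (llr P Q) P) (hexp : Integrable (fun x => Real.exp (f x)) Q) :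
    ∫ x, f x ∂P ≤ (∫ x, llr P Q x ∂P) + Real.log (∫ x, Real.exp (f x) ∂Q) := by
  have hQt : IsProbabilityMeasure (Q.tilted f) := isProbabilityMeasure_tilted hexp
  have hQQt : Q ≪ Q.tilted f := absolutelyContinuous_tilted hexp
  have hPQt : P ≪ Q.tilted f := hPQ.trans hQQt
  have hint' : Integrable (llr P (Q.tilted f)) P :=
    MeasureTheory.integrable_llr_tilted_right hPQ hf hllr hexp
  have h0 : 0 ≤ ∫ x, llr P (Q.tilted f) x ∂P := klDivR_nonneg' P (Q.tilted f) hPQt hint'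
  rw [MeasureTheory.integral_llr_tilted_right hPQ hf hexp hllr] at h0
  linarith

lemma integrable_of_exp_integrable (P Q : Measure α) [IsProbabilityMeasure P]
    [IsProbabilityMeasure Q] (hPQ : P ≪ Q) (h : α → ℝ) (hmeas : Measurable h)
    (hpos : ∀ x, 0 ≤ h x) (hexp : Integrable (fun x => Real.exp (h x)) Q)
    (hllr : Integrable (llr P Q) P) : Integrable h P := by
  set C : ℝ := (∫ x, llr P Q x ∂P) + Real.log (∫ x, Real.exp (h x) ∂Q) with hC
  have key : ∀ m : ℕ, Integrable (fun x => min (h x) m) P ∧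
      ∫ x, min (h x) m ∂P ≤ C := by
    intro m
    have hmmeas : Measurable (fun x => min (h x) m) := hmeas.min measurable_const
    have hInt : Integrable (fun x => min (h x) m) P := by
      refine Integrable.mono' (integrable_const (m : ℝ)) hmmeas.aestronglyMeasurable ?_
      refine Filter.Eventually.of_forall fun x => ?_
      rw [Real.norm_eq_abs, abs_of_nonneg (le_min (hpos x) m.cast_nonneg)]
      exact min_le_right _ _
    have hexpm : Integrable (fun x => Real.exp (min (h x) m)) Q := by
      refine Integrable.mono' hexp (hmmeas.exp).aestronglyMeasurable ?_
      refine Filter.Eventually.of_forall fun x => ?_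
      rw [Real.norm_eq_abs, abs_of_nonneg (Real.exp_pos _).le]
      exact Real.exp_le_exp.mpr (min_le_left _ _)
    refine ⟨hInt, ?_⟩
    refine (donsker_varadhan P Q hPQ _ hInt hllr hexpm).trans ?_
    have hlog : Real.log (∫ x, Real.exp (min (h x) m) ∂Q) ≤ Real.log (∫ x, Real.exp (h x) ∂Q) :=
      Real.log_le_log (integral_exp_pos hexpm)
        (integral_mono hexpm hexp fun x => Real.exp_le_exp.mpr (min_le_left _ _))
    linarith
  refine ⟨hmeas.aestronglyMeasurable, ?_⟩
  rw [hasFiniteIntegral_iff_ofReal (Filter.Eventually.of_forall hpos)]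
  have hsup : ∀ x, ⨆ m : ℕ, ENNReal.ofReal (min (h x) m) = ENNReal.ofReal (h x) := by
    intro x
    refine le_antisymm (iSup_le fun m => ENNReal.ofReal_le_ofReal (min_le_left _ _)) ?_
    refine le_trans (le_of_eq ?_) (le_iSup _ ⌈h x⌉₊)
    rw [min_eq_left (Nat.le_ceil _)]
  have : ∫⁻ x, ENNReal.ofReal (h x) ∂P
      = ⨆ m : ℕ, ∫⁻ x, ENNReal.ofReal (min (h x) m) ∂P := by
    rw [← lintegral_iSup (fun m => (hmeas.min measurable_const).ennreal_ofReal) ?_]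
    · exact lintegral_congr fun x => (hsup x).symm
    · intro i j hij x
      exact ENNReal.ofReal_le_ofReal (le_min (min_le_left _ _)
        ((min_le_right _ _).trans (by exact_mod_cast Nat.cast_le.mpr hij)))
  rw [this]
  have hfin : (ENNReal.ofReal C) < ⊤ := ENNReal.ofReal_lt_top
  refine lt_of_le_of_lt (iSup_le fun m => ?_) hfin
  obtain ⟨hInt, hle⟩ := key m
  rw [← ofReal_integral_eq_lintegral_ofReal hInt
    (Filter.Eventually.of_forall fun x => le_min (hpos x) m.cast_nonneg)]
  exact ENNReal.ofReal_le_ofReal hle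

end Aux

section Indep
variable {Ω 𝒵 : Type*} [MeasurableSpace Ω] [MeasurableSpace 𝒵]

lemma indep_sum_integrable_left (P : Measure Ω) [IsProbabilityMeasure P]
    (X Y : Ω → ℝ) (hX : Measurable X) (hY : Measurable Y)
    (hindep : IndepFun X Y P) (hint : Integrable (fun ω => X ω + Y ω) P) :
    Integrable X P := by
  have hmap : P.map (fun ω => (X ω, Y ω)) = (P.map X).prod (P.map Y) :=
    (indepFun_iff_map_prod_eq_prod_map_map hX.aemeasurable hY.aemeasurable).1 hindep
  have hmXY : Measurable (fun ω => (X ω, Y ω)) := hX.prodMk hY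
  have hf : Measurable (fun p : ℝ × ℝ => p.1 + p.2) := measurable_fst.add measurable_snd
  have hIprod : Integrable (fun p : ℝ × ℝ => p.1 + p.2) ((P.map X).prod (P.map Y)) := by
    rw [← hmap]
    rw [integrable_map_measure hf.aestronglyMeasurable hmXY.aemeasurable]
    exact hint
  haveI : IsProbabilityMeasure (P.map Y) := Measure.isProbabilityMeasure_map hY.aemeasurable
  haveI : IsProbabilityMeasure (P.map X) := Measure.isProbabilityMeasure_map hX.aemeasurable
  have hae : ∀ᵐ y ∂(P.map Y), Integrable (fun x => x + y) (P.map X) := by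
    filter_upwards [hIprod.prod_left_ae] with y hy using hy
  obtain ⟨y₀, hy₀⟩ := hae.exists
  have hid : Integrable (fun x : ℝ => x) (P.map X) := by
    have h2 := hy₀.sub (integrable_const y₀)
    have : ((fun x : ℝ => x + y₀) - fun _ => y₀) = fun x : ℝ => x := by
      funext x; simp
    rwa [this] at h2
  rw [integrable_map_measure hid.aestronglyMeasurable hX.aemeasurable] at hid
  exact hid

lemma iid_sum_integrable_term (P : Measure Ω) [IsProbabilityMeasure P]
    (n : ℕ) (Z : Fin n → Ω → 𝒵) (hZmeas : ∀ i, Measurable (Z i))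
    (hindep : iIndepFun Z P)
    (g : 𝒵 → ℝ) (hg : Measurable g)
    (hint : Integrable (fun ω => ∑ j, g (Z j ω)) P) (i : Fin n) :
    Integrable (fun ω => g (Z i ω)) P := by
  classical
  have hindep' : iIndepFun
      (fun j ω => g (Z j ω)) P := hindep.comp (fun _ => g) (fun _ => hg)
  have hXmeas : ∀ j, Measurable (fun ω => g (Z j ω)) := fun j => hg.comp (hZmeas j)
  have hY : IndepFun (∑ j ∈ Finset.univ.erase i, fun ω => g (Z j ω))
      (fun ω => g (Z i ω)) P :=
    hindep'.indepFun_finsetSum_of_notMem hXmeas (Finset.notMem_erase i _)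
  refine indep_sum_integrable_left P _ (∑ j ∈ Finset.univ.erase i, fun ω => g (Z j ω))
    (hXmeas i) (by measurability) hY.symm ?_
  have : (fun ω => g (Z i ω) + (∑ j ∈ Finset.univ.erase i, fun ω => g (Z j ω)) ω)
      = fun ω => ∑ j, g (Z j ω) := by
    funext ω
    simp only [Finset.sum_apply]
    rw [← Finset.add_sum_erase _ _ (Finset.mem_univ i)]
  rw [this]
  exact hint

end Indep

/-- **Intermediate rate under the `(ε^{1-β}, c)`-central condition:** the generalization error
is bounded in terms of `I(W;Zᵢ)^{1/(2-β)}`. -/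
theorem intermediate_rate_generalization_bound
    {Ω 𝒲 𝒵 : Type*} [MeasurableSpace Ω] [MeasurableSpace 𝒲] [MeasurableSpace 𝒵]
    (P : Measure Ω) [IsProbabilityMeasure P]
    (μ : Measure 𝒵) [IsProbabilityMeasure μ]
    (ℓ : 𝒲 → 𝒵 → ℝ) (hℓ : Measurable (Function.uncurry ℓ))
    (n : ℕ) (hn : 0 < n)
    (Z : Fin n → Ω → 𝒵) (hZmeas : ∀ i, Measurable (Z i))
    (hZlaw : ∀ i, P.map (Z i) = μ)
    (hindep : iIndepFun Z P)
    (W : Ω → 𝒲) (hW : Measurable W)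
    (wstar : 𝒲) (hwstar : ∀ w, ∫ z, ℓ wstar z ∂μ ≤ ∫ z, ℓ w z ∂μ)
    (r : 𝒲 → 𝒵 → ℝ) (hr : r = fun w z => ℓ w z - ℓ wstar z)
    (β c : ℝ) (hβ0 : 0 ≤ β) (hβ1 : β ≤ 1) (hc : 0 < c) (hc1 : c < 1)
    -- all expectations appearing are finite
    (hrInt : Integrable (fun p : 𝒲 × 𝒵 => r p.1 p.2) ((P.map W).prod μ))
    (hexpInt : ∀ η' : ℝ, 0 < η' →
      Integrable (fun p : 𝒲 × 𝒵 => Real.exp (-η' * r p.1 p.2)) ((P.map W).prod μ))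
    (hgenInt : Integrable
      (fun ω => (∫ z, ℓ (W ω) z ∂μ) - (n : ℝ)⁻¹ * ∑ i, ℓ (W ω) (Z i ω)) P)
    (hEmpInt : Integrable (fun ω => (n : ℝ)⁻¹ * ∑ i, r (W ω) (Z i ω)) P)
    (hac : ∀ i, P.map (fun ω => (W ω, Z i ω)) ≪ (P.map W).prod μ)
    (hllr : ∀ i, Integrable (llr (P.map (fun ω => (W ω, Z i ω))) ((P.map W).prod μ))
        (P.map (fun ω => (W ω, Z i ω))))
    -- the `(ε^{1-β}, c)`-central condition up to `ε`, for all `ε > 0`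
    (hcentral : ∀ ε : ℝ, 0 < ε →
      Real.log (∫ p, Real.exp (-(ε ^ ((1 : ℝ) - β)) * r p.1 p.2) ∂((P.map W).prod μ))
        ≤ -c * ε ^ ((1 : ℝ) - β) * (∫ p, r p.1 p.2 ∂((P.map W).prod μ))
            + ε ^ ((1 : ℝ) - β) * ε)
    -- positive mutual information
    (hIpos : ∀ i, 0 < klDivR (P.map (fun ω => (W ω, Z i ω))) ((P.map W).prod μ)) :
    ∫ ω, ((∫ z, ℓ (W ω) z ∂μ) - (n : ℝ)⁻¹ * ∑ i, ℓ (W ω) (Z i ω)) ∂P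
      ≤ (1 - c) / c * (∫ ω, (n : ℝ)⁻¹ * ∑ i, r (W ω) (Z i ω) ∂P)
        + (2 / (n * c)) * ∑ i,
            (klDivR (P.map (fun ω => (W ω, Z i ω))) ((P.map W).prod μ)) ^ ((1 : ℝ) / (2 - β)) := by
  classical
  haveI : IsProbabilityMeasure (P.map W) := Measure.isProbabilityMeasure_map hW.aemeasurable
  set Q : Measure (𝒲 × 𝒵) := (P.map W).prod μ with hQ
  haveI : IsProbabilityMeasure Q := by rw [hQ]; infer_instance
  -- basic measurability
  have hWZmeas : ∀ i, Measurable (fun ω => (W ω, Z i ω)) :=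
    fun i => hW.prodMk (hZmeas i)
  haveI : ∀ i, IsProbabilityMeasure (P.map (fun ω => (W ω, Z i ω))) :=
    fun i => Measure.isProbabilityMeasure_map (hWZmeas i).aemeasurable
  have hstarmeas : Measurable (fun z => ℓ wstar z) :=
    hℓ.comp (measurable_const.prodMk measurable_id)
  have hrmeas : Measurable (Function.uncurry r) := by
    rw [hr]
    exact hℓ.sub (hstarmeas.comp measurable_snd)
  have hrmeas' : Measurable (fun p : 𝒲 × 𝒵 => r p.1 p.2) := hrmeas
  have hnR : (0 : ℝ) < n := by exact_mod_cast hn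
  have hrapp : ∀ w z, r w z = ℓ w z - ℓ wstar z := by rw [hr]; exact fun _ _ => rfl
  -- integrability of the sum ∑ r(W, Z i)
  have hsumr : Integrable (fun ω => ∑ j, r (W ω) (Z j ω)) P := by
    have := hEmpInt.const_mul (n : ℝ)
    refine this.congr (Filter.Eventually.of_forall fun ω => ?_)
    field_simp
  -- Step A: per-i integrability of negative parts
  have hnegΩ : ∀ i, Integrable (fun ω => max (- r (W ω) (Z i ω)) 0) P := by
    intro i
    have hmeasN : Measurable (fun p : 𝒲 × 𝒵 => max (- r p.1 p.2) 0) :=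
      hrmeas'.neg.max measurable_const
    have hexpN : Integrable (fun p : 𝒲 × 𝒵 => Real.exp (max (- r p.1 p.2) 0)) Q := by
      refine Integrable.mono' ((hexpInt 1 one_pos).add (integrable_const 1))
        hmeasN.exp.aestronglyMeasurable (Filter.Eventually.of_forall fun p => ?_)
      simp only [Pi.add_apply]
      rw [Real.norm_eq_abs, abs_of_nonneg (Real.exp_pos _).le]
      rcases le_total (- r p.1 p.2) 0 with h | h
      · rw [max_eq_right h]
        simp only [Real.exp_zero]
        have : (0:ℝ) < Real.exp (-1 * r p.1 p.2) := Real.exp_pos _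
        linarith
      · rw [max_eq_left h]
        have : Real.exp (- r p.1 p.2) = Real.exp (-1 * r p.1 p.2) := by ring_nf
        rw [this]
        linarith
    have hN : Integrable (fun p : 𝒲 × 𝒵 => max (- r p.1 p.2) 0)
        (P.map (fun ω => (W ω, Z i ω))) :=
      integrable_of_exp_integrable _ Q (hac i) _ hmeasN
        (fun p => le_max_right _ _) hexpN (hllr i)
    rw [integrable_map_measure hmeasN.aestronglyMeasurable (hWZmeas i).aemeasurable] at hN
    exact hN
  -- positive parts
  have hposΩ : ∀ i, Integrable (fun ω => max (r (W ω) (Z i ω)) 0) P := by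
    intro i
    have hbound : Integrable (fun ω => |∑ j, r (W ω) (Z j ω)|
        + ∑ j, max (- r (W ω) (Z j ω)) 0) P :=
      hsumr.abs.add (integrable_finset_sum _ fun j _ => hnegΩ j)
    refine Integrable.mono' hbound
      ((hrmeas'.comp (hWZmeas i)).max measurable_const).aestronglyMeasurable
      (Filter.Eventually.of_forall fun ω => ?_)
    rw [Real.norm_eq_abs, abs_of_nonneg (le_max_right _ _)]
    refine max_le ?_ (by positivity)
    have h1 : r (W ω) (Z i ω) = (∑ j, r (W ω) (Z j ω))
        - ∑ j ∈ Finset.univ.erase i, r (W ω) (Z j ω) := by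
      rw [← Finset.add_sum_erase _ _ (Finset.mem_univ i)]; ring
    have h2 : - ∑ j ∈ Finset.univ.erase i, r (W ω) (Z j ω)
        ≤ ∑ j ∈ Finset.univ.erase i, max (- r (W ω) (Z j ω)) 0 := by
      rw [← Finset.sum_neg_distrib]
      exact Finset.sum_le_sum fun j _ => le_max_left _ _
    have h3 : ∑ j ∈ Finset.univ.erase i, max (- r (W ω) (Z j ω)) 0
        ≤ ∑ j, max (- r (W ω) (Z j ω)) 0 :=
      Finset.sum_le_sum_of_subset_of_nonneg (Finset.erase_subset _ _)
        (fun j _ _ => le_max_right _ _)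
    have h4 : ∑ j, r (W ω) (Z j ω) ≤ |∑ j, r (W ω) (Z j ω)| := le_abs_self _
    linarith
  have hri : ∀ i, Integrable (fun ω => r (W ω) (Z i ω)) P := by
    intro i
    have := (hposΩ i).sub (hnegΩ i)
    refine this.congr (Filter.Eventually.of_forall fun ω => ?_)
    simp only [Pi.sub_apply]
    rcases le_total (r (W ω) (Z i ω)) 0 with h | h
    · rw [max_eq_right h, max_eq_left (by linarith)]; ring
    · rw [max_eq_left h, max_eq_right (by linarith)]; ring
  -- Step B: joint integrability
  have hriJoint : ∀ i, Integrable (fun p : 𝒲 × 𝒵 => r p.1 p.2)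
      (P.map (fun ω => (W ω, Z i ω))) := by
    intro i
    rw [integrable_map_measure hrmeas'.aestronglyMeasurable (hWZmeas i).aemeasurable]
    exact hri i
  -- abbreviations
  set A : ℝ := ∫ p, r p.1 p.2 ∂Q with hA
  set D : Fin n → ℝ := fun i =>
    klDivR (P.map (fun ω => (W ω, Z i ω))) ((P.map W).prod μ) with hD
  set ε : Fin n → ℝ := fun i => (D i) ^ ((1 : ℝ) / (2 - β)) with hε
  set B : Fin n → ℝ := fun i => ∫ ω, r (W ω) (Z i ω) ∂P with hB
  have h2β : (0:ℝ) < 2 - β := by linarith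
  have hDpos : ∀ i, 0 < D i := hIpos
  have hεpos : ∀ i, 0 < ε i := fun i => Real.rpow_pos_of_pos (hDpos i) _
  -- Step C: key inequality c * A ≤ B i + 2 * ε i
  have hkey : ∀ i, c * A ≤ B i + 2 * ε i := by
    intro i
    set η : ℝ := (ε i) ^ ((1 : ℝ) - β) with hη
    have hηpos : 0 < η := Real.rpow_pos_of_pos (hεpos i) _
    have hDeq : D i = η * ε i := by
      have h1 : η * ε i = (ε i) ^ (((1:ℝ) - β) + 1) := by
        rw [Real.rpow_add_one (hεpos i).ne' (1 - β)]
      have h2 : ((1:ℝ) - β) + 1 = 2 - β := by ring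
      have h3 : (ε i) ^ ((2:ℝ) - β) = D i := by
        rw [hε]
        simp only
        rw [← Real.rpow_mul (hDpos i).le]
        have : (1:ℝ) / (2 - β) * (2 - β) = 1 := by field_simp
        rw [this, Real.rpow_one]
      rw [h1, h2, h3]
    have hdv := donsker_varadhan (P.map (fun ω => (W ω, Z i ω))) Q (hac i)
      (fun p => -η * r p.1 p.2) ((hriJoint i).const_mul (-η)) (hllr i)
      (hexpInt η hηpos)
    have hBmap : ∫ p, r p.1 p.2 ∂(P.map (fun ω => (W ω, Z i ω))) = B i :=
      integral_map (hWZmeas i).aemeasurable hrmeas'.aestronglyMeasurable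
    have hIl : ∫ p, -η * r p.1 p.2 ∂(P.map (fun ω => (W ω, Z i ω))) = -η * B i := by
      rw [integral_const_mul, hBmap]
    have hcent := hcentral (ε i) (hεpos i)
    rw [← hη] at hcent
    rw [hIl] at hdv
    have hklB : ∫ x, llr (P.map (fun ω => (W ω, Z i ω))) Q x
        ∂(P.map (fun ω => (W ω, Z i ω))) = D i := rfl
    rw [hklB] at hdv
    have hfin : -η * B i ≤ D i + (-c * η * A + η * ε i) := by
      refine hdv.trans ?_
      linarith
    have h6 : η * (c * A) ≤ η * (B i + 2 * ε i) := by
      rw [hDeq] at hfin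
      ring_nf at hfin ⊢
      linarith
    exact le_of_mul_le_mul_left h6 hηpos
  -- Step D: Integrability of ℓ wstar
  have hLmeas : Measurable (fun w => ∫ z, ℓ w z ∂μ) :=
    hℓ.stronglyMeasurable.integral_prod_right.measurable
  have hstarZ_of : (¬ Integrable (fun z => ℓ wstar z) μ) → False := by
    intro hns
    have haer : ∀ᵐ w ∂(P.map W), Integrable (fun z => r w z) μ := by
      have := hrInt.prod_right_ae
      filter_upwards [this] with w hw using hw
    have haeL : ∀ᵐ w ∂(P.map W), ∫ z, ℓ w z ∂μ = 0 := by
      filter_upwards [haer] with w hw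
      refine integral_undef fun hint => hns ?_
      have : (fun z => ℓ wstar z) = fun z => ℓ w z - r w z := by
        funext z; rw [hr]; ring
      rw [this]
      exact hint.sub hw
    have haeLΩ : ∀ᵐ ω ∂P, ∫ z, ℓ (W ω) z ∂μ = 0 :=
      ae_of_ae_map hW.aemeasurable haeL
    -- K := (1/n) ∑ ℓ(wstar, Z i) is integrable
    have hKint : Integrable (fun ω => (n : ℝ)⁻¹ * ∑ i, ℓ wstar (Z i ω)) P := by
      have h1 : Integrable (fun ω =>
          -((∫ z, ℓ (W ω) z ∂μ) - (n : ℝ)⁻¹ * ∑ i, ℓ (W ω) (Z i ω))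
            - (n : ℝ)⁻¹ * ∑ i, r (W ω) (Z i ω)) P := hgenInt.neg.sub hEmpInt
      refine h1.congr ?_
      filter_upwards [haeLΩ] with ω hω
      rw [hω]
      simp only [hrapp, Finset.sum_sub_distrib]
      ring
    have hsum : Integrable (fun ω => ∑ i, ℓ wstar (Z i ω)) P := by
      have := hKint.const_mul (n : ℝ)
      refine this.congr (Filter.Eventually.of_forall fun ω => ?_)
      field_simp
    have hterm := iid_sum_integrable_term P n Z hZmeas hindep
      (fun z => ℓ wstar z) hstarmeas hsum ⟨0, hn⟩
    refine hns ?_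
    have : Integrable (fun z => ℓ wstar z) (P.map (Z ⟨0, hn⟩)) := by
      rw [integrable_map_measure hstarmeas.aestronglyMeasurable
        (hZmeas ⟨0, hn⟩).aemeasurable]
      exact hterm
    rwa [hZlaw] at this
  have hstar : Integrable (fun z => ℓ wstar z) μ := by
    by_contra hns; exact hstarZ_of hns
  -- integrability of ℓ wstar (Z i ·) and its integral
  have hstarZ : ∀ i, Integrable (fun ω => ℓ wstar (Z i ω)) P := by
    intro i
    have : Integrable (fun z => ℓ wstar z) (P.map (Z i)) := by rw [hZlaw]; exact hstar
    rwa [integrable_map_measure hstarmeas.aestronglyMeasurable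
      (hZmeas i).aemeasurable] at this
  have hstarZint : ∀ i, ∫ ω, ℓ wstar (Z i ω) ∂P = ∫ z, ℓ wstar z ∂μ := by
    intro i
    rw [← hZlaw i]
    exact (integral_map (hZmeas i).aemeasurable hstarmeas.aestronglyMeasurable).symm
  -- a.e. decomposition of L
  have haeL : ∀ᵐ ω ∂P, ∫ z, ℓ (W ω) z ∂μ
      = (∫ z, r (W ω) z ∂μ) + ∫ z, ℓ wstar z ∂μ := by
    have haer : ∀ᵐ w ∂(P.map W), ∫ z, ℓ w z ∂μ
        = (∫ z, r w z ∂μ) + ∫ z, ℓ wstar z ∂μ := by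
      filter_upwards [hrInt.prod_right_ae] with w hw
      have hdec : (fun z => ℓ w z) = fun z => r w z + ℓ wstar z := by
        funext z; rw [hr]; ring
      rw [hdec, integral_add hw hstar]
    exact ae_of_ae_map hW.aemeasurable haer
  -- integrability of G
  have hGw : Integrable (fun w => ∫ z, r w z ∂μ) (P.map W) := by
    have := hrInt.integral_prod_left
    exact this
  have hGΩ : Integrable (fun ω => ∫ z, r (W ω) z ∂μ) P := by
    rwa [integrable_map_measure hGw.1 hW.aemeasurable] at hGw
  have hAint : ∫ ω, (∫ z, r (W ω) z ∂μ) ∂P = A := by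
    rw [← integral_map hW.aemeasurable hGw.1]
    rw [hA, hQ]
    exact (integral_prod _ hrInt).symm
  -- compute LHS
  have hLHS : ∫ ω, ((∫ z, ℓ (W ω) z ∂μ) - (n : ℝ)⁻¹ * ∑ i, ℓ (W ω) (Z i ω)) ∂P
      = A - ∫ ω, (n : ℝ)⁻¹ * ∑ i, r (W ω) (Z i ω) ∂P := by
    have hKint2 : Integrable (fun ω =>
        (∫ z, ℓ wstar z ∂μ) - (n : ℝ)⁻¹ * ∑ i, ℓ wstar (Z i ω)) P := by
      refine (integrable_const _).sub ?_
      exact (integrable_finset_sum _ fun i _ => hstarZ i).const_mul _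
    have hdecomp : (fun ω => (∫ z, ℓ (W ω) z ∂μ) - (n : ℝ)⁻¹ * ∑ i, ℓ (W ω) (Z i ω))
        =ᵐ[P] fun ω => ((∫ z, r (W ω) z ∂μ) - (n : ℝ)⁻¹ * ∑ i, r (W ω) (Z i ω))
          + ((∫ z, ℓ wstar z ∂μ) - (n : ℝ)⁻¹ * ∑ i, ℓ wstar (Z i ω)) := by
      filter_upwards [haeL] with ω hω
      rw [hω]
      simp only [hrapp, Finset.sum_sub_distrib]
      ring
    have hGE : Integrable (fun ω =>
        (∫ z, r (W ω) z ∂μ) - (n : ℝ)⁻¹ * ∑ i, r (W ω) (Z i ω)) P := hGΩ.sub hEmpInt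
    have hK0 : ∫ ω, (n : ℝ)⁻¹ * ∑ i, ℓ wstar (Z i ω) ∂P = ∫ z, ℓ wstar z ∂μ := by
      rw [integral_const_mul, integral_finset_sum _ fun i _ => hstarZ i]
      rw [Finset.sum_congr rfl fun i _ => hstarZint i]
      rw [Finset.sum_const, Finset.card_univ]
      simp only [Fintype.card_fin, nsmul_eq_mul]
      field_simp
    rw [integral_congr_ae hdecomp]
    rw [integral_add hGE hKint2, integral_sub hGΩ hEmpInt,
      integral_sub (integrable_const _)
        ((integrable_finset_sum _ fun i _ => hstarZ i).const_mul _),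
      integral_const, hAint, hK0]
    simp [measure_univ]
  -- compute ∫ E
  have hEint : ∫ ω, (n : ℝ)⁻¹ * ∑ i, r (W ω) (Z i ω) ∂P = (n : ℝ)⁻¹ * ∑ i, B i := by
    rw [integral_const_mul, integral_finset_sum _ fun i _ => hri i]
  -- final arithmetic
  rw [hLHS, hEint]
  have hsumkey : c * A * n ≤ (∑ i, B i) + 2 * ∑ i, ε i := by
    have hsum := Finset.sum_le_sum (fun i (_ : i ∈ Finset.univ) => hkey i)
    have h1 : (∑ _i : Fin n, c * A) = n * (c * A) := by
      rw [Finset.sum_const, Finset.card_univ, nsmul_eq_mul]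
      simp
    have h2 : ∑ i, (B i + 2 * ε i) = (∑ i, B i) + 2 * ∑ i, ε i := by
      rw [Finset.sum_add_distrib, ← Finset.mul_sum]
    rw [h1, h2] at hsum
    nlinarith [hsum]
  have hεrw : ∑ i, (klDivR (P.map (fun ω => (W ω, Z i ω))) ((P.map W).prod μ))
      ^ ((1 : ℝ) / (2 - β)) = ∑ i, ε i := rfl
  rw [hεrw]
  set SB : ℝ := ∑ i, B i with hSB
  set Sε : ℝ := ∑ i, ε i with hSε
  have key2 : A ≤ (SB + 2 * Sε) / (c * n) := by
    rw [le_div_iff₀ (by positivity)]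
    nlinarith [hsumkey]
  have hfinal : (1 - c) / c * ((n : ℝ)⁻¹ * SB) + 2 / (n * c) * Sε
      = (SB + 2 * Sε) / (c * n) - (n : ℝ)⁻¹ * SB := by
    field_simp
    ring
  rw [hfinal]
  linarith
end

section
/- (Expected Bernstein inequality.) Let U be a real random variable with U ≥ −b almost surely for some b > 0, with E[U] and E[U²] finite, and let κ(x) := (eˣ − x − 1)/x². Then for every η > 0 and every c_η ≥ κ(η b): log E[exp(η(E[U] − U))] ≤ η² c_η E[U²]. -/
open MeasureTheory

lemma aux_int (y : ℝ) (hy : y ≠ 0) :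
    Real.exp y - y - 1 = y ^ 2 * ∫ u in (0:ℝ)..1, (1 - u) * Real.exp (u * y) := by
  have h : ∀ u ∈ Set.uIcc (0:ℝ) 1,
      HasDerivAt (fun u => (1 - u) * Real.exp (u * y) / y + Real.exp (u * y) / y ^ 2)
        ((1 - u) * Real.exp (u * y)) u := by
    intro u _
    have he : HasDerivAt (fun u : ℝ => Real.exp (u * y)) (y * Real.exp (u * y)) u := by
      have := (Real.hasDerivAt_exp (u * y)).comp u ((hasDerivAt_id u).mul_const y)
      exact this.congr_deriv (by ring)
    have h1 : HasDerivAt (fun u : ℝ => (1 - u) * Real.exp (u * y) / y)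
        (((0 - 1) * Real.exp (u * y) + (1 - u) * (y * Real.exp (u * y))) / y) u :=
      (((hasDerivAt_const u (1:ℝ)).sub (hasDerivAt_id u)).mul he).div_const y
    have h2 : HasDerivAt (fun u : ℝ => Real.exp (u * y) / y ^ 2)
        (y * Real.exp (u * y) / y ^ 2) u := he.div_const _
    refine (h1.add h2).congr_deriv ?_
    field_simp
    ring
  have hint : IntervalIntegrable (fun u => (1 - u) * Real.exp (u * y)) volume 0 1 :=
    Continuous.intervalIntegrable (by continuity) _ _
  rw [intervalIntegral.integral_eq_sub_of_hasDerivAt h hint]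
  field_simp
  simp
  ring

lemma exp_taylor_le {c x : ℝ} (hc : 0 < c) (hx : x ≤ c) :
    Real.exp x - x - 1 ≤ (Real.exp c - c - 1) / c ^ 2 * x ^ 2 := by
  rcases eq_or_ne x 0 with rfl | hx0
  · simp
  · have hIx := aux_int x hx0
    have hIc := aux_int c hc.ne'
    have hmono : (∫ u in (0:ℝ)..1, (1 - u) * Real.exp (u * x))
        ≤ ∫ u in (0:ℝ)..1, (1 - u) * Real.exp (u * c) := by
      apply intervalIntegral.integral_mono_on zero_le_one
        (Continuous.intervalIntegrable (by continuity) _ _)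
        (Continuous.intervalIntegrable (by continuity) _ _)
      intro u hu
      have h0u : (0:ℝ) ≤ u := hu.1
      have h1u : u ≤ 1 := hu.2
      have hexp : Real.exp (u * x) ≤ Real.exp (u * c) :=
        Real.exp_le_exp.2 (by nlinarith)
      nlinarith [Real.exp_pos (u * x)]
    have heq : (Real.exp c - c - 1) / c ^ 2 = ∫ u in (0:ℝ)..1, (1 - u) * Real.exp (u * c) := by
      rw [hIc]; field_simp
    rw [hIx, heq]
    nlinarith [sq_nonneg x]

/-- **Expected Bernstein inequality.** If `U ≥ -b` almost surely, then for every `η > 0` and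
every `c_η ≥ κ(ηb)` with `κ(x) = (eˣ - x - 1)/x²`, one has
`log E[exp(η(E[U] - U))] ≤ η² c_η E[U²]`. -/
theorem expected_bernstein_inequality
    {Ω : Type*} [MeasurableSpace Ω] (P : Measure Ω) [IsProbabilityMeasure P]
    (U : Ω → ℝ) (hU : Measurable U)
    (b : ℝ) (hb : 0 < b) (hlb : ∀ᵐ ω ∂P, -b ≤ U ω)
    (hUInt : Integrable U P) (hU2Int : Integrable (fun ω => (U ω) ^ 2) P)
    (κ : ℝ → ℝ) (hκ : ∀ x, κ x = (Real.exp x - x - 1) / x ^ 2) :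
    ∀ η : ℝ, 0 < η → ∀ cη : ℝ, κ (η * b) ≤ cη →
      Real.log (∫ ω, Real.exp (η * ((∫ ω', U ω' ∂P) - U ω)) ∂P)
        ≤ η ^ 2 * cη * ∫ ω, (U ω) ^ 2 ∂P := by
  intro η hη cη hcη
  set m := ∫ ω', U ω' ∂P with hm
  rw [hκ] at hcη
  have hηb : 0 < η * b := by positivity
  have hpt : ∀ᵐ ω ∂P, Real.exp (-(η * U ω)) ≤ 1 - η * U ω + η ^ 2 * cη * U ω ^ 2 := by
    filter_upwards [hlb] with ω hω
    have hx : -(η * U ω) ≤ η * b := by nlinarith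
    have h1 := exp_taylor_le hηb hx
    have h2 : (Real.exp (η * b) - η * b - 1) / (η * b) ^ 2 * (-(η * U ω)) ^ 2
        ≤ cη * (-(η * U ω)) ^ 2 :=
      mul_le_mul_of_nonneg_right hcη (sq_nonneg _)
    nlinarith [h1, h2]
  have hgInt : Integrable (fun ω => 1 - η * U ω + η ^ 2 * cη * U ω ^ 2) P :=
    ((integrable_const 1).sub (hUInt.const_mul η)).add (hU2Int.const_mul _)
  have hexpInt : Integrable (fun ω => Real.exp (-(η * U ω))) P := by
    apply hgInt.mono' (Measurable.aestronglyMeasurable (by measurability))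
    filter_upwards [hpt] with ω hω
    rw [Real.norm_eq_abs, abs_of_pos (Real.exp_pos _)]
    exact hω
  have hIpos : 0 < ∫ ω, Real.exp (-(η * U ω)) ∂P := by
    apply integral_exp_pos hexpInt
  have hIle : ∫ ω, Real.exp (-(η * U ω)) ∂P
      ≤ 1 - η * m + η ^ 2 * cη * ∫ ω, U ω ^ 2 ∂P := by
    calc ∫ ω, Real.exp (-(η * U ω)) ∂P
        ≤ ∫ ω, (1 - η * U ω + η ^ 2 * cη * U ω ^ 2) ∂P :=
          integral_mono_ae hexpInt hgInt hpt
      _ = 1 - η * m + η ^ 2 * cη * ∫ ω, U ω ^ 2 ∂P := by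
          have ha : Integrable (fun ω => 1 - η * U ω) P :=
            (integrable_const 1).sub (hUInt.const_mul η)
          have hbb : Integrable (fun ω => η ^ 2 * cη * U ω ^ 2) P := hU2Int.const_mul _
          rw [integral_add ha hbb,
            integral_sub (integrable_const 1) (hUInt.const_mul η),
            integral_const, integral_const_mul, integral_const_mul]
          simp [hm]
  have hsplit : ∫ ω, Real.exp (η * (m - U ω)) ∂P
      = Real.exp (η * m) * ∫ ω, Real.exp (-(η * U ω)) ∂P := by
    rw [← integral_const_mul]
    congr 1
    funext ω
    rw [← Real.exp_add]
    ring_nf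
  rw [hsplit, Real.log_mul (Real.exp_ne_zero _) hIpos.ne', Real.log_exp]
  have hlog : Real.log (∫ ω, Real.exp (-(η * U ω)) ∂P)
      ≤ (1 - η * m + η ^ 2 * cη * ∫ ω, U ω ^ 2 ∂P) - 1 :=
    (Real.log_le_sub_one_of_pos hIpos).trans (by linarith)
  linarith
end

section
/- Assume the expected η-central condition holds for some η > 0, i.e. E_{P_W ⊗ μ}[exp(−η r(W', Z'))] ≤ 1, and that the (u, c)-witness condition holds for some u > 0 and c ∈ (0, 1], i.e. E_{P_W ⊗ μ}[r(W', Z') · 1{r(W', Z') ≤ u}] ≥ c · E_{P_W ⊗ μ}[r(W', Z')]. Let 0 < η' < η and set c_u := (1/c) · (η'u + 1)/(1 − η'/η). Then E_{P_W ⊗ μ}[r(W', Z')] ≤ −(c_u/η') · log E_{P_W ⊗ μ}[exp(−η' r(W', Z'))]. -/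
open MeasureTheory ProbabilityTheory

/-- Convexity of `exp`: interpolation inequality between two exponents. -/
lemma exp_interp_aux {p q : ℝ} (hp : 0 < p) (hq : 0 < q) (hpq : p ≤ q) (x : ℝ) :
    q * Real.exp (-p * x) ≤ p * Real.exp (-q * x) + (q - p) := by
  have h1 : (0:ℝ) ≤ p / q := (div_pos hp hq).le
  have h2 : (0:ℝ) ≤ 1 - p / q := by
    have : p / q ≤ 1 := (div_le_one hq).2 hpq
    linarith
  have h3 : p / q + (1 - p / q) = 1 := by ring
  have hconv := convexOn_exp.2 (Set.mem_univ (-q * x)) (Set.mem_univ (0 : ℝ)) h1 h2 h3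
  simp only [smul_eq_mul, mul_zero, add_zero, Real.exp_zero, mul_one] at hconv
  have hrw : p / q * (-q * x) = -p * x := by field_simp
  rw [hrw] at hconv
  have h4 := mul_le_mul_of_nonneg_left hconv hq.le
  have hq0 : q ≠ 0 := ne_of_gt hq
  calc q * Real.exp (-p * x) ≤ q * (p / q * Real.exp (-q * x) + (1 - p / q)) := h4
    _ = p * Real.exp (-q * x) + (q - p) := by field_simp

/-- Derivative helper for the basic exponential combination. -/
lemma hasDerivAt_comb (a b p q : ℝ) (hp : p ≠ 0) (hq : q ≠ 0) (y : ℝ) :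
    HasDerivAt (fun x : ℝ => (a / p) * (1 - Real.exp (-p * x)) + (b / q) * (Real.exp (-q * x) - 1))
      (a * Real.exp (-p * y) - b * Real.exp (-q * y)) y := by
  have e1 : HasDerivAt (fun x : ℝ => Real.exp (-p * x)) (Real.exp (-p * y) * (-p)) y := by
    have h : HasDerivAt (fun x : ℝ => -p * x) (-p) y := by
      simpa using (hasDerivAt_id y).const_mul (-p)
    exact h.exp
  have e2 : HasDerivAt (fun x : ℝ => Real.exp (-q * x)) (Real.exp (-q * y) * (-q)) y := by
    have h : HasDerivAt (fun x : ℝ => -q * x) (-q) y := by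
      simpa using (hasDerivAt_id y).const_mul (-q)
    exact h.exp
  have := (((hasDerivAt_const y (1 : ℝ)).sub e1).const_mul (a / p)).add
    ((e2.sub_const 1).const_mul (b / q))
  refine this.congr_deriv ?_
  field_simp
  ring

/-- Nonnegativity of the exponential combination for `x ≥ 0`. -/
lemma comb_nonneg {p q a b : ℝ} (hp : 0 < p) (hq : 0 < q) (hpq : p ≤ q)
    (hb : 0 ≤ b) (hab : b ≤ a) {x : ℝ} (hx : 0 ≤ x) :
    0 ≤ (a / p) * (1 - Real.exp (-p * x)) + (b / q) * (Real.exp (-q * x) - 1) := by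
  set f : ℝ → ℝ := fun x => (a / p) * (1 - Real.exp (-p * x)) + (b / q) * (Real.exp (-q * x) - 1)
    with hf
  have hder : ∀ y : ℝ, HasDerivAt f (a * Real.exp (-p * y) - b * Real.exp (-q * y)) y :=
    fun y => hasDerivAt_comb a b p q hp.ne' hq.ne' y
  have hmono : MonotoneOn f (Set.Ici 0) := by
    refine monotoneOn_of_deriv_nonneg (convex_Ici 0)
      (fun y _ => (hder y).continuousAt.continuousWithinAt)
      (fun y _ => (hder y).differentiableAt.differentiableWithinAt) ?_
    intro y hy
    rw [interior_Ici] at hy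
    rw [(hder y).deriv]
    have hy0 : (0 : ℝ) ≤ y := le_of_lt hy
    have hee : Real.exp (-q * y) ≤ Real.exp (-p * y) := by
      apply Real.exp_le_exp.2; nlinarith
    nlinarith [Real.exp_pos (-q * y), Real.exp_pos (-p * y)]
  have h0 : f 0 = 0 := by simp [hf]
  have := hmono (Set.self_mem_Ici) (Set.mem_Ici.2 hx) hx
  rw [h0] at this
  exact this

/-- Nonnegativity (including the `-x` term) for `x ≤ 0`. -/
lemma comb_nonneg_neg {p q a b : ℝ} (hp : 0 < p) (hq : 0 < q) (hpq : p ≤ q)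
    (hb : 0 ≤ b) (hab1 : a - b = 1) (hab2 : a * p ≤ b * q) {x : ℝ} (hx : x ≤ 0) :
    0 ≤ (a / p) * (1 - Real.exp (-p * x)) + (b / q) * (Real.exp (-q * x) - 1) - x := by
  set f : ℝ → ℝ := fun x =>
    (a / p) * (1 - Real.exp (-p * x)) + (b / q) * (Real.exp (-q * x) - 1) - x with hf
  have hder : ∀ y : ℝ, HasDerivAt f (a * Real.exp (-p * y) - b * Real.exp (-q * y) - 1) y := by
    intro y
    exact (hasDerivAt_comb a b p q hp.ne' hq.ne' y).sub (hasDerivAt_id y)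
  have hanti : AntitoneOn f (Set.Iic 0) := by
    refine antitoneOn_of_deriv_nonpos (convex_Iic 0)
      (fun y _ => (hder y).continuousAt.continuousWithinAt)
      (fun y _ => (hder y).differentiableAt.differentiableWithinAt) ?_
    intro y hy
    rw [interior_Iic] at hy
    rw [(hder y).deriv]
    have hy0 : y ≤ 0 := le_of_lt hy
    set X := Real.exp (-p * y) with hX
    set Y := Real.exp (-q * y) with hY
    have h1 : q * X ≤ p * Y + (q - p) := exp_interp_aux hp hq hpq y
    have hY1 : (1 : ℝ) ≤ Y := by
      rw [hY]; nlinarith [Real.add_one_le_exp (-q * y)]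
    -- a (X - 1) ≤ b (Y - 1)
    have step1 : a * q * (X - 1) ≤ a * p * (Y - 1) := by
      have ha : 0 ≤ a := by linarith
      nlinarith
    have step2 : a * p * (Y - 1) ≤ b * q * (Y - 1) := by nlinarith
    have : a * (X - 1) ≤ b * (Y - 1) := by nlinarith
    nlinarith
  have h0 : f 0 = 0 := by simp [hf]
  have := hanti (Set.mem_Iic.2 hx) Set.self_mem_Iic hx
  rw [h0] at this
  exact this

/-- Antitonicity of `t ↦ (1 - (t+1) e^{-t}) / t²` on `(0, ∞)`, in cross-multiplied form. -/
lemma V_anti {y z : ℝ} (hy : 0 < y) (hyz : y ≤ z) :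
    y ^ 2 * (1 - (z + 1) * Real.exp (-z)) ≤ z ^ 2 * (1 - (y + 1) * Real.exp (-y)) := by
  set V : ℝ → ℝ := fun t => (1 - (t + 1) * Real.exp (-t)) / t ^ 2 with hV
  have hder : ∀ t : ℝ, t ≠ 0 → HasDerivAt V
      ((t * Real.exp (-t) * t ^ 2 - (1 - (t + 1) * Real.exp (-t)) * (2 * t)) / (t ^ 2) ^ 2) t := by
    intro t ht
    have eexp : HasDerivAt (fun s : ℝ => Real.exp (-s)) (Real.exp (-t) * (-1)) t := by
      have h : HasDerivAt (fun s : ℝ => -s) (-1) t := (hasDerivAt_id t).neg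
      exact h.exp
    have eN : HasDerivAt (fun s : ℝ => 1 - (s + 1) * Real.exp (-s)) (t * Real.exp (-t)) t := by
      have h1 : HasDerivAt (fun s : ℝ => (s + 1) * Real.exp (-s))
          (1 * Real.exp (-t) + (t + 1) * (Real.exp (-t) * (-1))) t :=
        ((hasDerivAt_id t).add_const 1).mul eexp
      have := (hasDerivAt_const t (1 : ℝ)).sub h1
      refine this.congr_deriv ?_
      ring
    have eD : HasDerivAt (fun s : ℝ => s ^ 2) (2 * t) t := by
      simpa using hasDerivAt_pow 2 t
    have := eN.div eD (by positivity)
    exact this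
  have hanti : AntitoneOn V (Set.Ici y) := by
    refine antitoneOn_of_deriv_nonpos (convex_Ici y)
      (fun t ht => (hder t (lt_of_lt_of_le hy ht).ne').continuousAt.continuousWithinAt)
      (fun t ht => by
        rw [interior_Ici] at ht
        have : (0:ℝ) < t := lt_trans hy ht
        exact (hder t this.ne').differentiableAt.differentiableWithinAt) ?_
    intro t ht
    rw [interior_Ici] at ht
    have htpos : (0 : ℝ) < t := lt_trans hy ht
    rw [(hder t htpos.ne').deriv]
    apply div_nonpos_of_nonpos_of_nonneg _ (by positivity)
    have hq2 : 1 + t + t ^ 2 / 2 ≤ Real.exp t := Real.quadratic_le_exp_of_nonneg htpos.le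
    have hen : Real.exp (-t) * Real.exp t = 1 := by
      rw [← Real.exp_add]; simp
    have key2 : Real.exp (-t) * (t ^ 2 + 2 * t + 2) ≤ 2 := by
      nlinarith [mul_le_mul_of_nonneg_left hq2 (Real.exp_pos (-t)).le]
    nlinarith [mul_nonneg htpos.le (sub_nonneg.2 key2)]
  have hVle : V z ≤ V y := hanti Set.self_mem_Ici (Set.mem_Ici.2 hyz) hyz
  have hz : 0 < z := lt_of_lt_of_le hy hyz
  rw [hV] at hVle
  simp only [div_le_div_iff₀ (by positivity : (0:ℝ) < z ^ 2) (by positivity : (0:ℝ) < y ^ 2)] at hVle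
  nlinarith [hVle]

/-- The boundary function `H(v) ≥ 0` for `v ≥ 0`. -/
lemma H_nonneg {p q : ℝ} (hp : 0 < p) (hpq : p < q) {v : ℝ} (hv : 0 ≤ v) :
    v ≤ (q * (p * v + 1) / (p * (q - p))) * (1 - Real.exp (-p * v))
        + (p * (q * v + 1) / (q * (q - p))) * (Real.exp (-q * v) - 1) := by
  have hq : 0 < q := lt_trans hp hpq
  have hqp : 0 < q - p := by linarith
  rcases eq_or_lt_of_le hv with h0 | hv'
  · simp [← h0]
  · have key := V_anti (y := p * v) (z := q * v) (by positivity)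
      (by nlinarith)
    set X := Real.exp (-p * v) with hX
    set Y := Real.exp (-q * v) with hY
    have hXY : Real.exp (-(p * v)) = X ∧ Real.exp (-(q * v)) = Y := by
      constructor <;> [rw [hX]; rw [hY]] <;> ring_nf
    rw [hXY.1, hXY.2] at key
    -- key : (p*v)^2 * (1 - (q*v+1)*Y) ≤ (q*v)^2 * (1 - (p*v+1)*X)
    have h2 : p ^ 2 * (1 - (q * v + 1) * Y) ≤ q ^ 2 * (1 - (p * v + 1) * X) := by
      have hv2 : 0 < v ^ 2 := by positivity
      nlinarith [key]
    have expand : (q * (p * v + 1) / (p * (q - p))) * (1 - X)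
        + (p * (q * v + 1) / (q * (q - p))) * (Y - 1) - v
        = (q ^ 2 * (1 - (p * v + 1) * X) - p ^ 2 * (1 - (q * v + 1) * Y)) / (p * q * (q - p)) := by
      field_simp
      ring
    have : 0 ≤ (q * (p * v + 1) / (p * (q - p))) * (1 - X)
        + (p * (q * v + 1) / (q * (q - p))) * (Y - 1) - v := by
      rw [expand]
      apply div_nonneg (by linarith) (by positivity)
    linarith

/-- The main pointwise inequality. -/
lemma pointwise_bound {p q u : ℝ} (hp : 0 < p) (hpq : p < q) (hu : 0 < u) (x : ℝ) :
    (if x ≤ u then x else 0)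
      ≤ (q * (p * u + 1) / (p * (q - p))) * (1 - Real.exp (-p * x))
        + (p * (q * u + 1) / (q * (q - p))) * (Real.exp (-q * x) - 1) := by
  have hq : 0 < q := lt_trans hp hpq
  have hqp : 0 < q - p := by linarith
  set a := q * (p * u + 1) / (q - p) with ha
  set b := p * (q * u + 1) / (q - p) with hb
  have hAc : q * (p * u + 1) / (p * (q - p)) = a / p := by rw [ha]; field_simp
  have hBc : p * (q * u + 1) / (q * (q - p)) = b / q := by rw [hb]; field_simp
  have hbpos : 0 < b := by rw [hb]; positivity
  have hapos : 0 < a := by rw [ha]; positivity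
  have hab1 : a - b = 1 := by rw [ha, hb]; field_simp; ring
  have hab2 : a * p ≤ b * q := by
    rw [ha, hb]
    rw [div_mul_eq_mul_div, div_mul_eq_mul_div, div_le_div_iff₀ hqp hqp]
    nlinarith [mul_nonneg (mul_nonneg (mul_nonneg hp.le hq.le) hu.le)
      (mul_nonneg hqp.le hqp.le)]
  rw [hAc, hBc]
  by_cases hxu : x ≤ u
  · rw [if_pos hxu]
    by_cases hx0 : x ≤ 0
    · have := comb_nonneg_neg hp hq hpq.le hbpos.le hab1 hab2 hx0
      linarith
    · push_neg at hx0
      set X := Real.exp (-p * x) with hX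
      set Y := Real.exp (-q * x) with hY
      have hH := H_nonneg hp hpq (le_of_lt hx0)
      rw [← hX, ← hY] at hH
      have hd : (a / p) * (1 - X) + (b / q) * (Y - 1)
          = (q * (p * x + 1) / (p * (q - p))) * (1 - X)
            + (p * (q * x + 1) / (q * (q - p))) * (Y - 1)
            + ((u - x) / (q - p)) * ((q * (1 - X) - p * (1 - Y)) / (p * q) * (p * q)) := by
        rw [ha, hb]; field_simp; ring
      have hpos : 0 ≤ ((u - x) / (q - p)) * ((q * (1 - X) - p * (1 - Y)) / (p * q) * (p * q)) := by
        have h1 : q * X ≤ p * Y + (q - p) := exp_interp_aux hp hq hpq.le x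
        have h2 : 0 ≤ q * (1 - X) - p * (1 - Y) := by linarith
        have h3 : 0 ≤ (u - x) / (q - p) := div_nonneg (by linarith) hqp.le
        have : (q * (1 - X) - p * (1 - Y)) / (p * q) * (p * q) = q * (1 - X) - p * (1 - Y) := by
          field_simp
        rw [this]
        exact mul_nonneg h3 h2
      rw [hd]
      linarith
  · rw [if_neg hxu]
    push_neg at hxu
    have hx0 : (0 : ℝ) ≤ x := le_of_lt (lt_trans hu hxu)
    exact comb_nonneg hp hq hpq.le hbpos.le (by linarith) hx0

/-- **Lemma 2 (generalized from Grünwald–Mehta).** Under the expected `η`-central condition and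
the `(u, c)`-witness condition, the expected excess risk is bounded by `-c_u/η'` times the log
of the moment generating function `E[exp(-η' r(W', Z'))]`, for every `0 < η' < η`. -/
theorem central_witness_excess_risk_mgf_bound
    {𝒲 𝒵 : Type*} [MeasurableSpace 𝒲] [MeasurableSpace 𝒵]
    (Pw : Measure 𝒲) [IsProbabilityMeasure Pw]
    (μ : Measure 𝒵) [IsProbabilityMeasure μ]
    (ℓ : 𝒲 → 𝒵 → ℝ) (hℓ : Measurable (Function.uncurry ℓ))
    (wstar : 𝒲) (hwstar : ∀ w, ∫ z, ℓ wstar z ∂μ ≤ ∫ z, ℓ w z ∂μ)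
    (r : 𝒲 → 𝒵 → ℝ) (hr : r = fun w z => ℓ w z - ℓ wstar z)
    (η u c : ℝ) (hη : 0 < η) (hu : 0 < u) (hc : 0 < c) (hc1 : c ≤ 1)
    -- all expectations appearing are finite
    (hrInt : Integrable (fun p : 𝒲 × 𝒵 => r p.1 p.2) (Pw.prod μ))
    (hexpInt : ∀ η' : ℝ, 0 < η' → η' ≤ η →
      Integrable (fun p : 𝒲 × 𝒵 => Real.exp (-η' * r p.1 p.2)) (Pw.prod μ))
    (hwitInt : Integrable
      (fun p : 𝒲 × 𝒵 => if r p.1 p.2 ≤ u then r p.1 p.2 else 0) (Pw.prod μ))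
    -- expected `η`-central condition
    (hcentral : ∫ p, Real.exp (-η * r p.1 p.2) ∂(Pw.prod μ) ≤ 1)
    -- `(u, c)`-witness condition
    (hwitness : c * ∫ p, r p.1 p.2 ∂(Pw.prod μ)
      ≤ ∫ p, (if r p.1 p.2 ≤ u then r p.1 p.2 else 0) ∂(Pw.prod μ)) :
    ∀ η' : ℝ, 0 < η' → η' < η →
      ∫ p, r p.1 p.2 ∂(Pw.prod μ)
        ≤ -((1 / c) * (η' * u + 1) / (1 - η' / η) / η')
            * Real.log (∫ p, Real.exp (-η' * r p.1 p.2) ∂(Pw.prod μ)) := by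
  intro η' hη' hη'η
  set ν := Pw.prod μ with hν
  set Ac := η * (η' * u + 1) / (η' * (η - η')) with hAcdef
  set Bc := η' * (η * u + 1) / (η * (η - η')) with hBcdef
  have hqp : 0 < η - η' := by linarith
  have hAcpos : 0 < Ac := by rw [hAcdef]; positivity
  have hBcpos : 0 < Bc := by rw [hBcdef]; positivity
  have hIntX : Integrable (fun pt : 𝒲 × 𝒵 => Real.exp (-η' * r pt.1 pt.2)) ν :=
    hexpInt η' hη' hη'η.le
  have hIntY : Integrable (fun pt : 𝒲 × 𝒵 => Real.exp (-η * r pt.1 pt.2)) ν :=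
    hexpInt η hη le_rfl
  have hIntRHS : Integrable
      (fun pt : 𝒲 × 𝒵 => Ac * (1 - Real.exp (-η' * r pt.1 pt.2))
        + Bc * (Real.exp (-η * r pt.1 pt.2) - 1)) ν :=
    (((integrable_const (1 : ℝ)).sub hIntX).const_mul Ac).add
      ((hIntY.sub (integrable_const (1 : ℝ))).const_mul Bc)
  have hle1 : (∫ pt, (if r pt.1 pt.2 ≤ u then r pt.1 pt.2 else 0) ∂ν)
      ≤ ∫ pt, (Ac * (1 - Real.exp (-η' * r pt.1 pt.2))
        + Bc * (Real.exp (-η * r pt.1 pt.2) - 1)) ∂ν := by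
    refine integral_mono hwitInt hIntRHS ?_
    intro pt
    exact pointwise_bound hη' hη'η hu (r pt.1 pt.2)
  have hcalc : (∫ pt, (Ac * (1 - Real.exp (-η' * r pt.1 pt.2))
        + Bc * (Real.exp (-η * r pt.1 pt.2) - 1)) ∂ν)
      = Ac * (1 - ∫ pt, Real.exp (-η' * r pt.1 pt.2) ∂ν)
        + Bc * ((∫ pt, Real.exp (-η * r pt.1 pt.2) ∂ν) - 1) := by
    have hre : (fun pt : 𝒲 × 𝒵 => Ac * (1 - Real.exp (-η' * r pt.1 pt.2))
        + Bc * (Real.exp (-η * r pt.1 pt.2) - 1))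
        = fun pt : 𝒲 × 𝒵 => (Ac - Bc) + (Bc * Real.exp (-η * r pt.1 pt.2)
          - Ac * Real.exp (-η' * r pt.1 pt.2)) := by
      funext pt; ring
    rw [hre, integral_add (integrable_const _)
      (show Integrable (fun pt : 𝒲 × 𝒵 => Bc * Real.exp (-η * r pt.1 pt.2)
          - Ac * Real.exp (-η' * r pt.1 pt.2)) ν from
        (hIntY.const_mul Bc).sub (hIntX.const_mul Ac)),
      integral_sub (hIntY.const_mul Bc) (hIntX.const_mul Ac),
      integral_const_mul, integral_const_mul, integral_const]
    simp only [measure_univ, probReal_univ, ENNReal.toReal_one, smul_eq_mul, one_mul]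
    ring
  set A := ∫ pt, Real.exp (-η' * r pt.1 pt.2) ∂ν with hA
  have hApos : 0 < A := by
    rw [hA]
    rw [integral_pos_iff_support_of_nonneg (fun pt => (Real.exp_pos _).le) hIntX]
    have hsupp : Function.support (fun pt : 𝒲 × 𝒵 => Real.exp (-η' * r pt.1 pt.2)) = Set.univ :=
      Set.eq_univ_of_forall (fun pt => Real.exp_ne_zero _)
    rw [hsupp]
    simp
  have hlog : Real.log A ≤ A - 1 := Real.log_le_sub_one_of_pos hApos
  have hchain : c * (∫ pt, r pt.1 pt.2 ∂ν) ≤ Ac * (-Real.log A) := by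
    have h1 : Bc * ((∫ pt, Real.exp (-η * r pt.1 pt.2) ∂ν) - 1) ≤ 0 :=
      mul_nonpos_of_nonneg_of_nonpos hBcpos.le (by linarith [hcentral])
    have h2 : Ac * (1 - A) ≤ Ac * (-Real.log A) :=
      mul_le_mul_of_nonneg_left (by linarith) hAcpos.le
    calc c * (∫ pt, r pt.1 pt.2 ∂ν) ≤ _ := hwitness
      _ ≤ Ac * (1 - A) + Bc * ((∫ pt, Real.exp (-η * r pt.1 pt.2) ∂ν) - 1) := by
          rw [← hcalc]; exact hle1
      _ ≤ Ac * (1 - A) := by linarith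
      _ ≤ Ac * (-Real.log A) := h2
  have hconst : -((1 / c) * (η' * u + 1) / (1 - η' / η) / η') * Real.log A
      = Ac * (-Real.log A) / c := by
    rw [hAcdef]
    have h1 : (1 : ℝ) - η' / η ≠ 0 := by
      have : η' / η < 1 := (div_lt_one hη).2 hη'η
      linarith
    field_simp
  rw [hconst]
  exact (le_div_iff₀ hc).2 (by linarith [hchain])
end

section
/- Suppose the excess loss r(W', Z') is σ-sub-Gaussian under the product law P_W ⊗ μ, and let ρ := E_{P_W ⊗ μ}[r(W', Z')] > 0. Then for every η with 0 < η < 2ρ/σ², the learning tuple satisfies the (η, a_η)-central condition with a_η := 1 − ησ²/(2ρ), i.e. log E_{P_W ⊗ μ}[exp(−η r(W', Z'))] ≤ −a_η η ρ. -/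
open MeasureTheory ProbabilityTheory

/-- **The sub-Gaussian condition implies the `(η, a_η)`-central condition.** If the excess loss
is `σ`-sub-Gaussian under `P_W ⊗ μ` with positive expected excess risk `ρ`, then for every
`0 < η < 2ρ/σ²`, `log E[exp(-η r(W', Z'))] ≤ -a_η η ρ` with `a_η = 1 - ησ²/(2ρ)`. -/
theorem subGaussian_implies_eta_c_central
    {𝒲 𝒵 : Type*} [MeasurableSpace 𝒲] [MeasurableSpace 𝒵]
    (Pw : Measure 𝒲) [IsProbabilityMeasure Pw]
    (μ : Measure 𝒵) [IsProbabilityMeasure μ]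
    (ℓ : 𝒲 → 𝒵 → ℝ) (hℓ : Measurable (Function.uncurry ℓ))
    (wstar : 𝒲) (hwstar : ∀ w, ∫ z, ℓ wstar z ∂μ ≤ ∫ z, ℓ w z ∂μ)
    (r : 𝒲 → 𝒵 → ℝ) (hr : r = fun w z => ℓ w z - ℓ wstar z)
    (σ : ℝ) (hσ : 0 < σ)
    (ρ : ℝ) (hρ : ρ = ∫ p, r p.1 p.2 ∂(Pw.prod μ)) (hρpos : 0 < ρ)
    -- the excess loss is integrable and `σ`-sub-Gaussian under `P_W ⊗ μ`
    (hrInt : Integrable (fun p : 𝒲 × 𝒵 => r p.1 p.2) (Pw.prod μ))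
    (hMGF : ∀ η : ℝ,
      Integrable (fun p : 𝒲 × 𝒵 => Real.exp (η * (r p.1 p.2 - ρ))) (Pw.prod μ))
    (hsubG : ∀ η : ℝ,
      Real.log (∫ p, Real.exp (η * (r p.1 p.2 - ρ)) ∂(Pw.prod μ)) ≤ σ ^ 2 * η ^ 2 / 2) :
    ∀ η : ℝ, 0 < η → η < 2 * ρ / σ ^ 2 →
      Real.log (∫ p, Real.exp (-η * r p.1 p.2) ∂(Pw.prod μ))
        ≤ -(1 - η * σ ^ 2 / (2 * ρ)) * η * ρ := by
  intro η hη hη2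
  have key : (fun p : 𝒲 × 𝒵 => Real.exp (-η * r p.1 p.2))
      = fun p => Real.exp (-η * (r p.1 p.2 - ρ)) * Real.exp (-η * ρ) := by
    funext p
    rw [← Real.exp_add]
    ring_nf
  have hIeq : (∫ p, Real.exp (-η * r p.1 p.2) ∂(Pw.prod μ))
      = (∫ p, Real.exp (-η * (r p.1 p.2 - ρ)) ∂(Pw.prod μ)) * Real.exp (-η * ρ) := by
    rw [key, integral_mul_const]
  have hint := hMGF (-η)
  have hpos : 0 < ∫ p, Real.exp (-η * (r p.1 p.2 - ρ)) ∂(Pw.prod μ) := by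
    apply integral_exp_pos hint
  have hlog : Real.log (∫ p, Real.exp (-η * r p.1 p.2) ∂(Pw.prod μ))
      = Real.log (∫ p, Real.exp (-η * (r p.1 p.2 - ρ)) ∂(Pw.prod μ)) + (-η * ρ) := by
    rw [hIeq, Real.log_mul hpos.ne' (Real.exp_ne_zero _), Real.log_exp]
  rw [hlog]
  have := hsubG (-η)
  have heq : -(1 - η * σ ^ 2 / (2 * ρ)) * η * ρ = σ ^ 2 * (-η) ^ 2 / 2 + (-η * ρ) := by
    field_simp
    ring
  rw [heq]
  linarith
end

section
/- Let W' and Z be independent real Gaussian random variables with W' ∼ N(m, σ²/n) and Z ∼ N(m, σ²), and let r(w, z) = (w − z)² − (m − z)². Then for every η ∈ ℝ with 4η²σ⁴ + 2ησ² < n, E[exp(η r(W', Z))] = √( n / (n − 4η²σ⁴ − 2ησ²) ). -/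
open MeasureTheory ProbabilityTheory Real
open scoped NNReal ENNReal

lemma integrable_rexp_quad {b : ℝ} (hb : b < 0) (c : ℝ) :
    Integrable (fun x : ℝ => rexp (b * x ^ 2 + c * x)) := by
  have key : (fun x : ℝ => rexp (b * x ^ 2 + c * x))
      = fun x => rexp (-(-b) * (x + c / (2 * b)) ^ 2) * rexp (-(c ^ 2) / (4 * b)) := by
    funext x
    have hb' : b ≠ 0 := hb.ne
    rw [← Real.exp_add]
    congr 1
    field_simp
    ring
  rw [key]
  exact ((integrable_exp_neg_mul_sq (neg_pos.2 hb)).comp_add_right (c / (2 * b))).mul_const _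

lemma integral_rexp_quad {b : ℝ} (hb : b < 0) (c : ℝ) :
    ∫ x : ℝ, rexp (b * x ^ 2 + c * x) = √(π / (-b)) * rexp (-(c ^ 2) / (4 * b)) := by
  have key : ∀ x : ℝ, rexp (b * x ^ 2 + c * x)
      = rexp (-(-b) * (x + c / (2 * b)) ^ 2) * rexp (-(c ^ 2) / (4 * b)) := by
    intro x
    have hb' : b ≠ 0 := hb.ne
    rw [← Real.exp_add]
    congr 1
    field_simp
    ring
  simp_rw [key]
  rw [integral_mul_const, integral_add_right_eq_self (fun x => rexp (-(-b) * x ^ 2)) (c / (2 * b)),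
    integral_gaussian]

lemma gauss_quad_aux (μ : ℝ) (v : ℝ≥0) (hv : 0 < (v : ℝ)) {a : ℝ} (t : ℝ)
    (h : 2 * a * v < 1) :
    (fun x => gaussianPDFReal μ v x * rexp (a * (x - μ) ^ 2 + t * (x - μ)))
      = fun x => (√(2 * π * v))⁻¹ *
          rexp ((a - (2 * (v : ℝ))⁻¹) * (x - μ) ^ 2 + t * (x - μ)) := by
  funext x
  rw [gaussianPDFReal, mul_assoc, ← Real.exp_add]
  congr 2
  field_simp
  ring

lemma integrable_gauss_quad (μ : ℝ) (v : ℝ≥0) (hv : 0 < (v : ℝ)) {a : ℝ} (t : ℝ)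
    (h : 2 * a * v < 1) :
    Integrable (fun x => rexp (a * (x - μ) ^ 2 + t * (x - μ))) (gaussianReal μ v) := by
  have hv0 : v ≠ 0 := by
    intro hz; rw [hz] at hv; simp at hv
  have hb : a - (2 * (v : ℝ))⁻¹ < 0 := by
    have h2v : 0 < 2 * (v : ℝ) := by positivity
    rw [sub_neg, inv_eq_one_div, lt_div_iff₀ h2v]
    linarith
  rw [gaussianReal_of_var_ne_zero _ hv0, gaussianPDF_def]
  have hrfl : (fun x => ENNReal.ofReal (gaussianPDFReal μ v x))
      = fun x => ((gaussianPDFReal μ v x).toNNReal : ℝ≥0∞) := rfl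
  rw [hrfl, integrable_withDensity_iff_integrable_smul
    (measurable_gaussianPDFReal μ v).real_toNNReal]
  have : (fun x => ((gaussianPDFReal μ v x).toNNReal : ℝ≥0)
        • rexp (a * (x - μ) ^ 2 + t * (x - μ)))
      = fun x => (√(2 * π * v))⁻¹ *
          rexp ((a - (2 * (v : ℝ))⁻¹) * (x - μ) ^ 2 + t * (x - μ)) := by
    funext x
    rw [NNReal.smul_def, Real.coe_toNNReal _ (gaussianPDFReal_nonneg μ v x)]
    exact congrFun (gauss_quad_aux μ v hv t h) x
  rw [this]
  refine Integrable.const_mul ?_ _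
  have := (integrable_rexp_quad hb t).comp_sub_right (g := μ)
  simpa using this

lemma integral_gauss_quad (μ : ℝ) (v : ℝ≥0) (hv : 0 < (v : ℝ)) {a : ℝ} (t : ℝ)
    (h : 2 * a * v < 1) :
    ∫ x, rexp (a * (x - μ) ^ 2 + t * (x - μ)) ∂(gaussianReal μ v)
      = rexp (t ^ 2 * v / (2 * (1 - 2 * a * v))) / √(1 - 2 * a * v) := by
  have hv0 : v ≠ 0 := by
    intro hz; rw [hz] at hv; simp at hv
  have hD : 0 < 1 - 2 * a * v := by linarith
  have hb : a - (2 * (v : ℝ))⁻¹ < 0 := by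
    have h2v : 0 < 2 * (v : ℝ) := by positivity
    rw [sub_neg, inv_eq_one_div, lt_div_iff₀ h2v]
    linarith
  rw [gaussianReal_of_var_ne_zero _ hv0, gaussianPDF_def]
  have hrfl : (fun x => ENNReal.ofReal (gaussianPDFReal μ v x))
      = fun x => ((gaussianPDFReal μ v x).toNNReal : ℝ≥0∞) := rfl
  rw [hrfl, integral_withDensity_eq_integral_smul
    (measurable_gaussianPDFReal μ v).real_toNNReal]
  have hsm : (fun x => ((gaussianPDFReal μ v x).toNNReal : ℝ≥0)
        • rexp (a * (x - μ) ^ 2 + t * (x - μ)))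
      = fun x => (√(2 * π * v))⁻¹ *
          rexp ((a - (2 * (v : ℝ))⁻¹) * (x - μ) ^ 2 + t * (x - μ)) := by
    funext x
    rw [NNReal.smul_def, Real.coe_toNNReal _ (gaussianPDFReal_nonneg μ v x)]
    exact congrFun (gauss_quad_aux μ v hv t h) x
  rw [hsm, integral_const_mul,
    integral_sub_right_eq_self
      (fun y => rexp ((a - (2 * (v : ℝ))⁻¹) * y ^ 2 + t * y)) μ,
    integral_rexp_quad hb t]
  have hexp : -(t ^ 2) / (4 * (a - (2 * (v : ℝ))⁻¹))
      = t ^ 2 * v / (2 * (1 - 2 * a * v)) := by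
    rw [div_eq_div_iff]
    · field_simp
      ring
    · have : 4 * (a - (2 * (v : ℝ))⁻¹) < 0 := by linarith
      exact this.ne
    · positivity
  rw [hexp]
  rw [show (√(2 * π * v))⁻¹ * (√(π / -(a - (2 * (v:ℝ))⁻¹)) * rexp (t ^ 2 * v / (2 * (1 - 2 * a * v))))
      = (√(2 * π * v))⁻¹ * √(π / -(a - (2 * (v:ℝ))⁻¹)) * rexp (t ^ 2 * v / (2 * (1 - 2 * a * v))) by ring]
  rw [div_eq_mul_one_div, mul_comm]
  congr 1
  rw [← Real.sqrt_inv, ← Real.sqrt_mul (by positivity)]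
  rw [one_div, ← Real.sqrt_inv]
  congr 1
  have hπ : (0:ℝ) < π := Real.pi_pos
  have hbne : a - (2 * (v:ℝ))⁻¹ ≠ 0 := hb.ne
  have hY : π * (v:ℝ) * 2 - π * (v:ℝ) ^ 2 * a * 4 ≠ 0 := by
    have hY' : π * (v:ℝ) * 2 - π * (v:ℝ) ^ 2 * a * 4 = 2 * π * v * (1 - 2 * a * v) := by ring
    rw [hY']
    positivity
  field_simp
  rw [show 2 * (v:ℝ) * a - 1 = -(1 - 2 * (v:ℝ) * a) by ring, div_neg, neg_neg]

/-- **Gaussian mean estimation, MGF of the excess loss:** if `W' ∼ N(m, σ²/n)` and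
`Z ∼ N(m, σ²)` are independent, then for every `η` with `4η²σ⁴ + 2ησ² < n`,
`E[exp(η r(W', Z))] = √(n / (n - 4η²σ⁴ - 2ησ²))`. -/
theorem gaussian_mean_estimation_mgf
    {Ω : Type*} [MeasurableSpace Ω] (P : Measure Ω) [IsProbabilityMeasure P]
    (m σ : ℝ) (hσ : 0 < σ) (n : ℕ) (hn : 1 ≤ n)
    (W' : Ω → ℝ) (hW'meas : Measurable W')
    (hW'law : P.map W' = gaussianReal m ⟨σ ^ 2 / n, by positivity⟩)
    (Z : Ω → ℝ) (hZmeas : Measurable Z)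
    (hZlaw : P.map Z = gaussianReal m ⟨σ ^ 2, sq_nonneg σ⟩)
    (hindep : IndepFun W' Z P)
    (r : ℝ → ℝ → ℝ) (hr : r = fun w z => (w - z) ^ 2 - (m - z) ^ 2) :
    ∀ η : ℝ, 4 * η ^ 2 * σ ^ 4 + 2 * η * σ ^ 2 < n →
      ∫ ω, Real.exp (η * r (W' ω) (Z ω)) ∂P
        = Real.sqrt (n / (n - 4 * η ^ 2 * σ ^ 4 - 2 * η * σ ^ 2)) := by
  intro η hη
  subst hr
  have hnpos : (0:ℝ) < n := by exact_mod_cast hn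
  set v1 : ℝ≥0 := ⟨σ ^ 2 / n, by positivity⟩ with hv1def
  set v2 : ℝ≥0 := ⟨σ ^ 2, sq_nonneg σ⟩ with hv2def
  have hv1 : (v1 : ℝ) = σ ^ 2 / n := rfl
  have hv2 : (v2 : ℝ) = σ ^ 2 := rfl
  have hv1pos : 0 < (v1 : ℝ) := by rw [hv1]; positivity
  have hv2pos : 0 < (v2 : ℝ) := by rw [hv2]; positivity
  set μ1 := gaussianReal m v1 with hμ1def
  set μ2 := gaussianReal m v2 with hμ2def
  set g : ℝ × ℝ → ℝ := fun p => Real.exp (η * ((p.1 - p.2) ^ 2 - (m - p.2) ^ 2)) with hgdef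
  have hgc : Continuous g := by
    rw [hgdef]; fun_prop
  set c : ℝ := η + 2 * η ^ 2 * σ ^ 2 with hcdef
  have hD : 0 < (n:ℝ) - 4 * η ^ 2 * σ ^ 4 - 2 * η * σ ^ 2 := by linarith
  have hcond : 2 * c * (v1 : ℝ) < 1 := by
    rw [hv1, hcdef]
    rw [show 2 * (η + 2 * η ^ 2 * σ ^ 2) * (σ ^ 2 / n)
        = (4 * η ^ 2 * σ ^ 4 + 2 * η * σ ^ 2) / n by field_simp; ring]
    rw [div_lt_one hnpos]
    exact hη
  -- pushforward to the product measure
  have hmap : P.map (fun ω => (W' ω, Z ω)) = μ1.prod μ2 := by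
    have h := (indepFun_iff_map_prod_eq_prod_map_map hW'meas.aemeasurable
      hZmeas.aemeasurable).mp hindep
    rw [hW'law, hZlaw] at h
    exact h
  have step1 : ∫ ω, Real.exp (η * ((W' ω - Z ω) ^ 2 - (m - Z ω) ^ 2)) ∂P
      = ∫ p, g p ∂(μ1.prod μ2) := by
    rw [← hmap, integral_map (hW'meas.prodMk hZmeas).aemeasurable
      hgc.aestronglyMeasurable]
  -- inner integral
  have hsplit : ∀ w z : ℝ, g (w, z)
      = Real.exp (η * (w - m) ^ 2)
        * Real.exp ((0:ℝ) * (z - m) ^ 2 + (-2 * η * (w - m)) * (z - m)) := by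
    intro w z
    show Real.exp (η * ((w - z) ^ 2 - (m - z) ^ 2)) = _
    rw [← Real.exp_add]
    congr 1
    ring
  have hz01 : 2 * (0:ℝ) * (v2 : ℝ) < 1 := by norm_num
  have hinner : ∀ w : ℝ, ∫ z, g (w, z) ∂μ2 = Real.exp (c * (w - m) ^ 2) := by
    intro w
    have hfe : (fun z => g (w, z)) = fun z => Real.exp (η * (w - m) ^ 2)
        * Real.exp ((0:ℝ) * (z - m) ^ 2 + (-2 * η * (w - m)) * (z - m)) :=
      funext fun z => hsplit w z
    rw [hfe, integral_const_mul, integral_gauss_quad m v2 hv2pos (-2 * η * (w - m)) hz01,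
      show 1 - 2 * (0:ℝ) * (v2 : ℝ) = 1 by ring, Real.sqrt_one, div_one, ← Real.exp_add]
    congr 1
    rw [hv2, hcdef]
    ring
  have hinner_int : ∀ w : ℝ, Integrable (fun z => g (w, z)) μ2 := by
    intro w
    have hfe : (fun z => g (w, z)) = fun z => Real.exp (η * (w - m) ^ 2)
        * Real.exp ((0:ℝ) * (z - m) ^ 2 + (-2 * η * (w - m)) * (z - m)) :=
      funext fun z => hsplit w z
    rw [hfe]
    exact (integrable_gauss_quad m v2 hv2pos (-2 * η * (w - m)) hz01).const_mul _
  -- Tonelli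
  have hg_nonneg : ∀ p : ℝ × ℝ, 0 ≤ g p := fun p => (Real.exp_pos _).le
  have step2 : ∫ p, g p ∂(μ1.prod μ2)
      = (∫⁻ p, ENNReal.ofReal (g p) ∂(μ1.prod μ2)).toReal := by
    rw [integral_eq_lintegral_of_nonneg_ae (Filter.Eventually.of_forall hg_nonneg)
      hgc.aestronglyMeasurable]
  have step3 : ∫⁻ p, ENNReal.ofReal (g p) ∂(μ1.prod μ2)
      = ∫⁻ w, ∫⁻ z, ENNReal.ofReal (g (w, z)) ∂μ2 ∂μ1 :=
    lintegral_prod _ (hgc.measurable.ennreal_ofReal.aemeasurable)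
  have step4 : ∀ w : ℝ, ∫⁻ z, ENNReal.ofReal (g (w, z)) ∂μ2
      = ENNReal.ofReal (Real.exp (c * (w - m) ^ 2)) := by
    intro w
    rw [← ofReal_integral_eq_lintegral_ofReal (hinner_int w)
      (Filter.Eventually.of_forall fun z => hg_nonneg (w, z)), hinner w]
  have houter_int : Integrable (fun w => Real.exp (c * (w - m) ^ 2)) μ1 := by
    have h := integrable_gauss_quad m v1 hv1pos (a := c) 0 hcond
    simpa using h
  have houter : ∫ w, Real.exp (c * (w - m) ^ 2) ∂μ1
      = 1 / Real.sqrt (1 - 2 * c * (v1 : ℝ)) := by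
    have h := integral_gauss_quad m v1 hv1pos (a := c) 0 hcond
    simpa using h
  have step5 : ∫⁻ w, ENNReal.ofReal (Real.exp (c * (w - m) ^ 2)) ∂μ1
      = ENNReal.ofReal (1 / Real.sqrt (1 - 2 * c * (v1 : ℝ))) := by
    rw [← ofReal_integral_eq_lintegral_ofReal houter_int
      (Filter.Eventually.of_forall fun w => (Real.exp_pos _).le), houter]
  have hfin : 1 - 2 * c * (v1 : ℝ) = ((n:ℝ) - 4 * η ^ 2 * σ ^ 4 - 2 * η * σ ^ 2) / n := by
    rw [hv1, hcdef]
    field_simp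
    ring
  rw [step1, step2, step3]
  simp_rw [step4]
  rw [step5, ENNReal.toReal_ofReal (by positivity), hfin]
  rw [show (n:ℝ) / ((n:ℝ) - 4 * η ^ 2 * σ ^ 4 - 2 * η * σ ^ 2)
      = (((n:ℝ) - 4 * η ^ 2 * σ ^ 4 - 2 * η * σ ^ 2) / n)⁻¹ by rw [inv_div]]
  rw [Real.sqrt_inv, one_div]
end

section
/- (Decoupling via Donsker–Varadhan.) Let P and Q be probability measures on measurable spaces 𝒳 and 𝒴, let Π be a probability measure on 𝒳 × 𝒴 whose marginals are P and Q, and let f : 𝒳 × 𝒴 → ℝ be measurable, integrable under both Π and P ⊗ Q, and σ-sub-Gaussian under P ⊗ Q. Then E_{P⊗Q}[f] − E_Π[f] ≤ √(2σ² · D_KL(Π ‖ P ⊗ Q)). -/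
open MeasureTheory ProbabilityTheory
open Real

lemma gibbs_nonneg {α : Type*} [MeasurableSpace α] (μ ν : Measure α)
    [IsProbabilityMeasure μ] [IsProbabilityMeasure ν] (hμν : μ ≪ ν)
    (h_int : Integrable (llr μ ν) μ) : 0 ≤ ∫ x, llr μ ν x ∂μ := by
  have hint2 : Integrable (fun x ↦ (ν.rnDeriv μ x).toReal) μ :=
    Measure.integrable_toReal_rnDeriv
  have hle : ∀ᵐ x ∂μ, - llr μ ν x ≤ (ν.rnDeriv μ x).toReal - 1 := by
    filter_upwards [exp_neg_llr hμν] with x hx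
    have := add_one_le_exp (- llr μ ν x)
    rw [hx] at this
    linarith
  have h1 : ∫ x, - llr μ ν x ∂μ ≤ ∫ x, ((ν.rnDeriv μ x).toReal - 1) ∂μ :=
    integral_mono_ae h_int.neg (hint2.sub (integrable_const 1)) hle
  have h2 : ∫ x, ((ν.rnDeriv μ x).toReal - 1) ∂μ
      = (∫ x, (ν.rnDeriv μ x).toReal ∂μ) - 1 := by
    rw [integral_sub hint2 (integrable_const 1)]
    simp
  have h3 : ∫ x, (ν.rnDeriv μ x).toReal ∂μ ≤ 1 := by
    have := Measure.setIntegral_toReal_rnDeriv_le (μ := ν) (ν := μ)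
      (s := Set.univ) (measure_ne_top ν _)
    simpa using this
  rw [integral_neg] at h1
  linarith

lemma dv_le {α : Type*} [MeasurableSpace α] (μ ν : Measure α)
    [IsProbabilityMeasure μ] [IsProbabilityMeasure ν] (hμν : μ ≪ ν)
    (g : α → ℝ) (hgμ : Integrable g μ)
    (hexp : Integrable (fun x ↦ Real.exp (g x)) ν)
    (h_int : Integrable (llr μ ν) μ) :
    ∫ x, g x ∂μ ≤ Real.log (∫ x, Real.exp (g x) ∂ν) + ∫ x, llr μ ν x ∂μ := by
  have hP : IsProbabilityMeasure (ν.tilted g) := isProbabilityMeasure_tilted hexp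
  have hac' : μ ≪ ν.tilted g := hμν.trans (absolutelyContinuous_tilted hexp)
  have hint' : Integrable (llr μ (ν.tilted g)) μ :=
    integrable_llr_tilted_right hμν hgμ h_int hexp
  have h0 : 0 ≤ ∫ x, llr μ (ν.tilted g) x ∂μ := gibbs_nonneg μ _ hac' hint'
  rw [integral_llr_tilted_right hμν hgμ hexp h_int] at h0
  linarith

open MeasureTheory ProbabilityTheory Real

lemma key_ineq {α : Type*} [MeasurableSpace α] (μ ν : Measure α)
    [IsProbabilityMeasure μ] [IsProbabilityMeasure ν] (hμν : μ ≪ ν)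
    (f : α → ℝ) (hfμ : Integrable f μ)
    (hMGF : ∀ η : ℝ, Integrable (fun p => Real.exp (η * (f p - ∫ q, f q ∂ν))) ν)
    (hsubG : ∀ η : ℝ, Real.log (∫ p, Real.exp (η * (f p - ∫ q, f q ∂ν)) ∂ν)
        ≤ (σ:ℝ) ^ 2 * η ^ 2 / 2)
    (h_int : Integrable (llr μ ν) μ) (η : ℝ) :
    η * ((∫ q, f q ∂ν) - ∫ x, f x ∂μ) ≤ σ ^ 2 * η ^ 2 / 2 + ∫ x, llr μ ν x ∂μ := by
  set m := ∫ q, f q ∂ν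
  have hgμ : Integrable (fun x => (-η) * (f x - m)) μ := (hfμ.sub (integrable_const m)).const_mul _
  have h := dv_le μ ν hμν (fun x => (-η) * (f x - m)) hgμ (hMGF (-η)) h_int
  have h1 : ∫ x, (-η) * (f x - m) ∂μ = η * (m - ∫ x, f x ∂μ) := by
    rw [integral_const_mul, integral_sub hfμ (integrable_const m)]
    simp; ring
  have h2 := hsubG (-η)
  rw [h1] at h
  calc η * (m - ∫ x, f x ∂μ) ≤ _ := h
    _ ≤ σ ^ 2 * η ^ 2 / 2 + ∫ x, llr μ ν x ∂μ := by
        have : (σ:ℝ)^2 * (-η)^2/2 = σ^2*η^2/2 := by ring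
        linarith [h2, this ▸ h2]


/-- **Decoupling via Donsker–Varadhan.** If `J` is a joint law on `𝒳 × 𝒴` with marginals
`P` and `Q`, and `f` is `σ`-sub-Gaussian under `P ⊗ Q`, then
`E_{P⊗Q}[f] - E_J[f] ≤ √(2σ² D(J ‖ P ⊗ Q))`. -/
theorem donsker_varadhan_decoupling
    {𝒳 𝒴 : Type*} [MeasurableSpace 𝒳] [MeasurableSpace 𝒴]
    (P : Measure 𝒳) [IsProbabilityMeasure P]
    (Q : Measure 𝒴) [IsProbabilityMeasure Q]
    (J : Measure (𝒳 × 𝒴)) [IsProbabilityMeasure J]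
    (hfst : J.map Prod.fst = P) (hsnd : J.map Prod.snd = Q)
    (f : 𝒳 × 𝒴 → ℝ) (hf : Measurable f)
    (hfJ : Integrable f J) (hfPQ : Integrable f (P.prod Q))
    (σ : ℝ) (hσ : 0 ≤ σ)
    (hMGF : ∀ η : ℝ,
      Integrable (fun p => Real.exp (η * (f p - ∫ q, f q ∂(P.prod Q)))) (P.prod Q))
    (hsubG : ∀ η : ℝ,
      Real.log (∫ p, Real.exp (η * (f p - ∫ q, f q ∂(P.prod Q))) ∂(P.prod Q))
        ≤ σ ^ 2 * η ^ 2 / 2)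
    (hac : J ≪ P.prod Q)
    (hllr : Integrable (llr J (P.prod Q)) J) :
    (∫ p, f p ∂(P.prod Q)) - ∫ p, f p ∂J
      ≤ Real.sqrt (2 * σ ^ 2 * klDivR J (P.prod Q)) := by
  set K : ℝ := klDivR J (P.prod Q) with hK
  set A : ℝ := (∫ p, f p ∂(P.prod Q)) - ∫ p, f p ∂J with hA
  have hKnn : 0 ≤ K := gibbs_nonneg J (P.prod Q) hac hllr
  have key : ∀ η : ℝ, η * A ≤ σ ^ 2 * η ^ 2 / 2 + K :=
    fun η => key_ineq J (P.prod Q) hac f hfJ hMGF hsubG hllr η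
  have hsqrt : 0 ≤ Real.sqrt (2 * σ ^ 2 * K) := Real.sqrt_nonneg _
  rcases le_or_gt A 0 with hA0 | hA0
  · linarith
  rcases eq_or_lt_of_le (sq_nonneg σ) with hσ0 | hσ0
  · -- σ² = 0 : η A ≤ K for all η, contradiction with A > 0
    exfalso
    have h := key ((K + 1) / A)
    rw [← hσ0] at h
    rw [div_mul_cancel₀ _ hA0.ne'] at h
    linarith
  · -- σ² > 0 : take η = A / σ²
    have h := key (A / σ ^ 2)
    have h1 : (A / σ ^ 2) * A = A ^ 2 / σ ^ 2 := by ring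
    have h2 : σ ^ 2 * (A / σ ^ 2) ^ 2 / 2 = A ^ 2 / σ ^ 2 / 2 := by
      field_simp
    rw [h1, h2] at h
    have hA2 : A ^ 2 ≤ 2 * σ ^ 2 * K := by
      rw [div_le_iff₀ hσ0, div_div] at h
      have h3 : (A ^ 2 / (σ ^ 2 * 2) + K) * σ ^ 2 = A ^ 2 / 2 + K * σ ^ 2 := by
        rw [add_mul, div_mul_eq_mul_div, mul_comm (σ ^ 2) 2, mul_div_mul_right _ _ hσ0.ne']
      rw [h3] at h
      nlinarith [h, sq_nonneg A]
    calc A = Real.sqrt (A ^ 2) := (Real.sqrt_sq hA0.le).symm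
      _ ≤ Real.sqrt (2 * σ ^ 2 * K) := Real.sqrt_le_sqrt hA2
end
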